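/- arXiv:1605.03241 — 5 statements merged into one kernel-verified Lean document; each statement's English description precedes it below -/
import Mathlib

section
/- For all real numbers k with 0 < k < 1 and x with 0 ≤ x < 1, and α > 0, the Poisson growth rate g_P = α(k - x)/(1 - k) is greater than or equal to the Bernoulli growth rate g_B = α(((√(1 + 4k(1-k)) - 1)/(2(1-k)))(1 - x) - x). -/
/-- Poisson FRS growth rate dominates Bernoulli FRS growth rate. -/
theorem gP_ge_gB (k x α : ℝ) (hk0 : 0 < k) (hk1 : k < 1)
    (hx0 : 0 ≤ x) (hx1 : x < 1) (hα : 0 < α) :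
    α * (k - x) / (1 - k) ≥
      α * ((Real.sqrt (1 + 4 * k * (1 - k)) - 1) / (2 * (1 - k)) * (1 - x) - x) := by
  have h1k : 0 < 1 - k := by linarith
  have hs : Real.sqrt (1 + 4 * k * (1 - k)) ≤ 1 + 2 * k := by
    have h := Real.sqrt_le_sqrt (show 1 + 4 * k * (1 - k) ≤ (1 + 2 * k) ^ 2 by nlinarith)
    rwa [Real.sqrt_sq (by positivity)] at h
  have ht : (Real.sqrt (1 + 4 * k * (1 - k)) - 1) / (2 * (1 - k)) ≤ k / (1 - k) := by
    rw [div_le_div_iff₀ (by linarith) h1k]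
    nlinarith
  have hx : (0:ℝ) ≤ 1 - x := by linarith
  have key : (Real.sqrt (1 + 4 * k * (1 - k)) - 1) / (2 * (1 - k)) * (1 - x) - x ≤
      (k - x) / (1 - k) := by
    have h2 : k / (1 - k) * (1 - x) - x = (k - x) / (1 - k) := by
      field_simp; ring
    nlinarith [mul_le_mul_of_nonneg_right ht hx]
  rw [ge_iff_le, mul_div_assoc]
  exact mul_le_mul_of_nonneg_left key hα.le
end

section
/- Let 0 < k < 1, 0 ≤ x < 1, α > 0. Define g_B = α(((√(1+4k(1-k)) - 1)/(2(1-k)))(1-x) - x) and a_B = 1 - x(1 - kx)/(k(1-x)²). Then a_B ≤ 0 if and only if g_B ≤ 0. -/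
/-- the Bernoulli equilibrium prevalence is nonpositive
iff the Bernoulli growth rate is nonpositive. -/
theorem aB_nonpos_iff_gB_nonpos (k x α : ℝ) (hk0 : 0 < k) (hk1 : k < 1)
    (hx0 : 0 ≤ x) (hx1 : x < 1) (hα : 0 < α) :
    1 - x * (1 - k * x) / (k * (1 - x) ^ 2) ≤ 0 ↔
      α * ((Real.sqrt (1 + 4 * k * (1 - k)) - 1) / (2 * (1 - k)) * (1 - x) - x) ≤ 0 := by
  set s := Real.sqrt (1 + 4 * k * (1 - k)) with hs
  have ht : (0:ℝ) ≤ 1 + 4 * k * (1 - k) := by nlinarith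
  have hs0 : 0 ≤ s := Real.sqrt_nonneg _
  have hs2 : s ^ 2 = 1 + 4 * k * (1 - k) := Real.sq_sqrt ht
  have hk1' : (0:ℝ) < 1 - k := by linarith
  have hx1' : (0:ℝ) < 1 - x := by linarith
  have hR : 0 < 1 + (1 - 2 * k) * x := by nlinarith
  have hB : 0 < k * (1 - x) ^ 2 := by positivity
  -- common quadratic
  have key : (k - (2 * k + 1) * x + 2 * k * x ^ 2 ≤ 0) ↔
      (s * (1 - x) ≤ 1 + (1 - 2 * k) * x) := by
    constructor
    · intro hQ
      nlinarith [sq_nonneg (s * (1 - x) - (1 + (1 - 2 * k) * x)),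
        sq_nonneg (s * (1 - x) + (1 + (1 - 2 * k) * x)),
        mul_nonneg hs0 hx1'.le]
    · intro h
      have h2 : (s * (1 - x)) ^ 2 ≤ (1 + (1 - 2 * k) * x) ^ 2 := by
        have := mul_nonneg hs0 hx1'.le
        nlinarith
      nlinarith [h2, hs2, hk1']
  constructor
  · intro h
    have h1 : k * (1 - x) ^ 2 ≤ x * (1 - k * x) := by
      rw [sub_nonpos, le_div_iff₀ hB] at h
      linarith
    have hQ : k - (2 * k + 1) * x + 2 * k * x ^ 2 ≤ 0 := by nlinarith
    have hE : (s - 1) / (2 * (1 - k)) * (1 - x) - x ≤ 0 := by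
      rw [sub_nonpos, div_mul_eq_mul_div, div_le_iff₀ (by linarith : (0:ℝ) < 2 * (1 - k))]
      have := key.mp hQ
      nlinarith
    nlinarith
  · intro h
    have hE : (s - 1) / (2 * (1 - k)) * (1 - x) - x ≤ 0 := by
      by_contra hc
      push_neg at hc
      nlinarith
    have h3 : (s - 1) * (1 - x) ≤ 2 * (1 - k) * x := by
      rw [sub_nonpos, div_mul_eq_mul_div, div_le_iff₀ (by linarith : (0:ℝ) < 2 * (1 - k))] at hE
      linarith
    have hQ : k - (2 * k + 1) * x + 2 * k * x ^ 2 ≤ 0 := key.mpr (by nlinarith)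
    rw [sub_nonpos, le_div_iff₀ hB]
    nlinarith
end

section
/- For 0 < k < 1 and 0 ≤ x ≤ 1/2, the Poisson equilibrium prevalence a_P = (k - x)/(k(1 - x)) is greater than or equal to the Bernoulli equilibrium prevalence a_B = 1 - x(1 - kx)/(k(1 - x)²). -/
/-- Poisson equilibrium prevalence dominates Bernoulli equilibrium prevalence. -/
theorem aP_ge_aB (k x : ℝ) (hk0 : 0 < k) (hk1 : k < 1)
    (hx0 : 0 ≤ x) (hx1 : x ≤ 1 / 2) :
    (k - x) / (k * (1 - x)) ≥ 1 - x * (1 - k * x) / (k * (1 - x) ^ 2) := by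
  have h1x : 0 < 1 - x := by linarith
  rw [ge_iff_le, ← sub_nonneg]
  have h : (k - x) / (k * (1 - x)) - (1 - x * (1 - k * x) / (k * (1 - x) ^ 2))
      = x * (k * (1 - 2 * x) + x) / (k * (1 - x) ^ 2) := by
    field_simp
    ring
  rw [h]
  apply div_nonneg
  · nlinarith [mul_nonneg (mul_nonneg hk0.le hx0) (by linarith : (0:ℝ) ≤ 1 - 2 * x), sq_nonneg x]
  · positivity
end

section
/- For 0 < k < 1, 0 ≤ μ < α, the larger eigenvalue of the 2×2 matrix M with M₁₁ = −μ, M₁₂ = λ_B, M₂₁ = σ + μ, M₂₂ = −(λ_B + μ) − (σ + μ), where σ = α − 2μ and λ_B = (σ + μ)k/(1 − k), equals (α − μ)(√(1 + 4k(1-k)) − 1)/(2(1 − k)) − μ. -/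
/-- the larger eigenvalue of the coefficient matrix of the Bernoulli
FRS ODE system equals the growth rate g_B. -/
theorem bernoulli_eigenvalue (k α μ : ℝ) (hk0 : 0 < k) (hk1 : k < 1)
    (hμ : 0 ≤ μ) (hμα : μ < α) (hσ : 0 ≤ α - 2 * μ) :
    let σ : ℝ := α - 2 * μ
    let lamB : ℝ := (σ + μ) * k / (1 - k)
    let M : Matrix (Fin 2) (Fin 2) ℝ := !![-μ, lamB; σ + μ, -(lamB + μ) - (σ + μ)]
    let gB : ℝ := (α - μ) * (Real.sqrt (1 + 4 * k * (1 - k)) - 1) / (2 * (1 - k)) - μ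
    (∃ v : Fin 2 → ℝ, v ≠ 0 ∧ M.mulVec v = gB • v) ∧
      ∀ e : ℝ, (∃ v : Fin 2 → ℝ, v ≠ 0 ∧ M.mulVec v = e • v) → e ≤ gB := by
  intro σ lamB M gB
  have h1k : 0 < 1 - k := by linarith
  have hβ : 0 < σ + μ := by simp only [σ]; linarith
  have hD : (0:ℝ) ≤ 1 + 4 * k * (1 - k) := by nlinarith
  set s : ℝ := Real.sqrt (1 + 4 * k * (1 - k)) with hs
  have hs2 : s ^ 2 = 1 + 4 * k * (1 - k) := Real.sq_sqrt hD
  have hs1 : 1 ≤ s := by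
    rw [hs]
    have h1 : (1:ℝ) = Real.sqrt 1 := by simp
    rw [h1]
    exact Real.sqrt_le_sqrt (by nlinarith)
  have hσμ : σ + μ = α - μ := by simp only [σ]; ring
  have hlamB : 0 < lamB := by
    simp only [lamB]
    positivity
  have hgb : gB + μ = (σ + μ) * (s - 1) / (2 * (1 - k)) := by
    simp only [gB, hσμ, hs]; ring
  have hlb : lamB = (σ + μ) * k / (1 - k) := rfl
  have hgBμ : 0 ≤ gB + μ := by
    rw [hgb]
    apply div_nonneg
    · apply mul_nonneg (by linarith) (by linarith)
    · linarith
  -- key characteristic identity for gB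
  have key2 : (s - 1) ^ 2 + 2 * (s - 1) - 4 * k * (1 - k) = 0 := by linear_combination hs2
  have keyid : (gB + μ) ^ 2 + (lamB + (σ + μ)) * (gB + μ) - lamB * (σ + μ) = 0 := by
    have factored : (gB + μ) ^ 2 + (lamB + (σ + μ)) * (gB + μ) - lamB * (σ + μ)
        = ((σ + μ) / (2 * (1 - k))) ^ 2 * ((s - 1) ^ 2 + 2 * (s - 1) - 4 * k * (1 - k)) := by
      rw [hgb, hlb]; field_simp; ring
    rw [factored, key2, mul_zero]
  constructor
  · refine ⟨![lamB, gB + μ], ?_, ?_⟩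
    · intro h
      have := congrFun h 0
      simp at this
      linarith
    · funext i
      fin_cases i
      · simp [M, Matrix.mulVec, dotProduct, Fin.sum_univ_succ]
        ring
      · simp [M, Matrix.mulVec, dotProduct, Fin.sum_univ_succ]
        linear_combination -keyid
  · rintro e ⟨v, hv, hMv⟩
    have h0 := congrFun hMv 0
    have h1 := congrFun hMv 1
    simp [M, Matrix.mulVec, dotProduct, Fin.sum_univ_succ] at h0 h1
    have hP : (e + μ) ^ 2 + (lamB + (σ + μ)) * (e + μ) - lamB * (σ + μ) = 0 := by
      by_cases hv1 : v 1 = 0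
      · exfalso
        have hv0 : v 0 = 0 := by
          have h1' : (σ + μ) * v 0 = 0 := by
            rw [hv1] at h1; linarith
          exact (mul_eq_zero.mp h1').resolve_left (by linarith)
        apply hv
        funext i; fin_cases i <;> simp [hv0, hv1]
      · have hz : ((e + μ) ^ 2 + (lamB + (σ + μ)) * (e + μ) - lamB * (σ + μ)) * v 1 = 0 := by
          linear_combination (-(σ + μ)) * h0 - (e + μ) * h1
        exact (mul_eq_zero.mp hz).resolve_right hv1
    have hfac : (e - gB) * ((e + μ) + (lamB + (σ + μ)) + (gB + μ)) = 0 := by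
      linear_combination hP - keyid
    rcases mul_eq_zero.mp hfac with h | h
    · have := sub_eq_zero.mp h
      linarith [this.le]
    · linarith
end

section
/- Let 0 < k < 1, 0 < x ≤ 1/2, α > 0, μ = xα, σ = α − 2μ, λ_B = (σ+μ)k/(1−k), n > 0. If (a, w) with a, w > 0 satisfies 0 = (1 − a/n)λ_B w − μ a and 0 = −(λ_B + μ)w + (σ + μ)(a − w), then a/n = 1 − x(1 − kx)/(k(1 − x)²). -/
/-- the stationarity conditions of the logistic mean-field system for
the Bernoulli FRS model imply the closed-form equilibrium prevalence a_B. -/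
theorem bernoulli_equilibrium (k x α n a w : ℝ) (hk0 : 0 < k) (hk1 : k < 1)
    (hx0 : 0 < x) (hx1 : x ≤ 1 / 2) (hα : 0 < α) (hn : 0 < n)
    (ha : 0 < a) (hw : 0 < w) :
    let μ : ℝ := x * α
    let σ : ℝ := α - 2 * μ
    let lamB : ℝ := (σ + μ) * k / (1 - k)
    (1 - a / n) * lamB * w - μ * a = 0 →
    -(lamB + μ) * w + (σ + μ) * (a - w) = 0 →
    a / n = 1 - x * (1 - k * x) / (k * (1 - x) ^ 2) := by
  intro μ σ lamB e1 e2
  have hx' : x < 1 := by linarith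
  have h1k : (1:ℝ) - k ≠ 0 := by intro h; linarith [h]
  have hα' : α ≠ 0 := ne_of_gt hα
  have hn' : n ≠ 0 := ne_of_gt hn
  have ha' : a ≠ 0 := ne_of_gt ha
  have hk' : k ≠ 0 := ne_of_gt hk0
  have h1x : (1:ℝ) - x ≠ 0 := by intro h; linarith [h]
  simp only [μ, σ, lamB] at e1 e2
  field_simp at e1 e2
  have hne : α * ((1 - k) * a) ≠ 0 := by positivity
  have key : (n - a) * k * (1 - x) ^ 2 = x * n * (1 - k * x) :=
    mul_left_cancel₀ hne (by linear_combination (1 - k * x) * e1 + (n - a) * (1 - x) * k * e2)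
  have hkx2 : k * (1 - x) ^ 2 ≠ 0 := by
    apply mul_ne_zero hk' (pow_ne_zero _ h1x)
  rw [div_eq_iff hn', sub_mul, one_mul, div_mul_eq_mul_div, eq_sub_iff_add_eq,
    ← eq_sub_iff_add_eq', div_eq_iff hkx2]
  linear_combination -key
end
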